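/- arXiv:1311.7102 — 2 statements merged into one kernel-verified Lean document; each statement's English description precedes it below -/
import Mathlib

section
/- For every continuous function f : ℝ → ℝ, the function u(s) := (∫₀^s tanh⁻²(s') ∫₀^{s'} tanh(s'') f(s'') ds'' ds') · tanh(s) satisfies u''(s) + 2 cosh⁻²(s) u(s) = f(s) for all s ∈ ℝ. -/
open Real MeasureTheory Set Filter intervalIntegral Topology

namespace L0Aux

noncomputable def II (f : ℝ → ℝ) (s : ℝ) : ℝ := ∫ t in (0:ℝ)..s, tanh t * f t
noncomputable def JJ (f : ℝ → ℝ) (s : ℝ) : ℝ := ∫ t in (0:ℝ)..s, (t * tanh t - 1) * f t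
noncomputable def gg (f : ℝ → ℝ) (t : ℝ) : ℝ := (tanh t ^ 2)⁻¹ * II f t
noncomputable def ww (f : ℝ → ℝ) (s : ℝ) : ℝ := ∫ t in (0:ℝ)..s, gg f t
noncomputable def WW (f : ℝ → ℝ) (s : ℝ) : ℝ := II f s * (s * tanh s - 1) * (tanh s)⁻¹ - JJ f s
noncomputable def vv (f : ℝ → ℝ) (s : ℝ) : ℝ := II f s * (s * tanh s - 1) - tanh s * JJ f s

lemma continuous_tanh : Continuous Real.tanh := by
  have : Real.tanh = fun x => Real.sinh x / Real.cosh x := funext fun x => tanh_eq_sinh_div_cosh x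
  rw [this]
  exact Real.continuous_sinh.div Real.continuous_cosh fun x => (Real.cosh_pos x).ne'

lemma hasDerivAt_tanh (x : ℝ) : HasDerivAt Real.tanh ((Real.cosh x ^ 2)⁻¹) x := by
  have h : Real.tanh = fun x => Real.sinh x / Real.cosh x :=
    funext fun x => tanh_eq_sinh_div_cosh x
  rw [h]
  have := (Real.hasDerivAt_sinh x).div (Real.hasDerivAt_cosh x) (Real.cosh_pos x).ne'
  refine this.congr_deriv ?_
  symm
  have h1 := Real.cosh_sq_sub_sinh_sq x
  have h2 := (Real.cosh_pos x).ne'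
  field_simp
  nlinarith [Real.cosh_pos x]

lemma tanh_ne_zero {x : ℝ} (hx : x ≠ 0) : Real.tanh x ≠ 0 := by
  rw [tanh_eq_sinh_div_cosh]
  exact div_ne_zero (Real.sinh_ne_zero.2 hx) (Real.cosh_pos x).ne'

lemma abs_tanh (x : ℝ) : |Real.tanh x| = Real.tanh |x| := by
  rcases le_or_gt 0 x with h | h
  · rw [abs_of_nonneg h, abs_of_nonneg]
    rw [tanh_eq_sinh_div_cosh]
    exact div_nonneg (by simpa using h) (Real.cosh_pos x).le
  · have hx : Real.tanh x ≤ 0 := by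
      rw [tanh_eq_sinh_div_cosh]
      exact div_nonpos_of_nonpos_of_nonneg (by simpa using h.le) (Real.cosh_pos x).le
    rw [abs_of_nonpos hx, abs_of_neg h, Real.tanh_neg]

lemma tanh_le_tanh {x y : ℝ} (h : x ≤ y) : Real.tanh x ≤ Real.tanh y := by
  rw [tanh_eq_sinh_div_cosh, tanh_eq_sinh_div_cosh,
    div_le_div_iff₀ (Real.cosh_pos x) (Real.cosh_pos y)]
  have := Real.sinh_sub x y
  have hxy : Real.sinh (x - y) ≤ 0 := by
    rw [Real.sinh_nonpos_iff]; linarith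
  nlinarith

lemma abs_tanh_le {x t : ℝ} (h : |x| ≤ |t|) : |Real.tanh x| ≤ |Real.tanh t| := by
  rw [abs_tanh, abs_tanh]; exact tanh_le_tanh h

lemma abs_self_le_abs_sinh (x : ℝ) : |x| ≤ |Real.sinh x| := by
  rw [Real.abs_sinh]
  exact Real.self_le_sinh_iff.2 (abs_nonneg x)

section

variable (f : ℝ → ℝ) (hf : Continuous f)

include hf

lemma hI (s : ℝ) : HasDerivAt (II f) (tanh s * f s) s :=
  integral_hasDerivAt_right ((continuous_tanh.mul hf).intervalIntegrable _ _)
    ((continuous_tanh.mul hf).stronglyMeasurableAtFilter _ _)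
    (continuous_tanh.mul hf).continuousAt

lemma hJ (s : ℝ) : HasDerivAt (JJ f) ((s * tanh s - 1) * f s) s :=
  integral_hasDerivAt_right
    (((continuous_id.mul continuous_tanh).sub continuous_const).mul hf |>.intervalIntegrable _ _)
    (((continuous_id.mul continuous_tanh).sub continuous_const).mul hf
      |>.stronglyMeasurableAtFilter _ _)
    (((continuous_id.mul continuous_tanh).sub continuous_const).mul hf).continuousAt

lemma I_cont : Continuous (II f) := by
  exact continuous_iff_continuousAt.2 fun s => (hI f hf s).differentiableAt.continuousAt

lemma I_zero : II f 0 = 0 := integral_same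

lemma J_zero : JJ f 0 = 0 := integral_same

/-- bound on `II` from a bound on `f`. -/
lemma I_bound {M t : ℝ} (hM : ∀ x, |x| ≤ |t| → |f x| ≤ M) :
    |II f t| ≤ M * |Real.tanh t| * |t| := by
  have h : ∀ x ∈ Set.uIoc (0:ℝ) t, ‖Real.tanh x * f x‖ ≤ M * |Real.tanh t| := by
    intro x hx
    have hxt : |x| ≤ |t| := by
      rcases Set.mem_uIoc.1 hx with h1 | h1
      · rw [abs_of_pos h1.1]; exact h1.2.trans (le_abs_self t)
      · rw [abs_of_nonpos h1.2]; exact (neg_le_neg h1.1.le).trans (neg_le_abs t)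
    have := abs_tanh_le hxt
    have hfx := hM x hxt
    rw [Real.norm_eq_abs, abs_mul]
    calc |Real.tanh x| * |f x| ≤ |Real.tanh t| * M :=
          mul_le_mul this hfx (abs_nonneg _) ((abs_nonneg _).trans this)
      _ = M * |Real.tanh t| := mul_comm _ _
  have := intervalIntegral.norm_integral_le_of_norm_le_const h
  simpa [II, abs_mul, mul_comm, mul_assoc] using this

lemma g_bound {M t : ℝ} (hM : ∀ x, |x| ≤ |t| → |f x| ≤ M) :
    |gg f t| ≤ M * Real.cosh t := by
  rcases eq_or_ne t 0 with rfl | ht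
  · have hM0 : 0 ≤ M := (abs_nonneg _).trans (hM 0 (by simp))
    simp [gg, I_zero f hf]
    positivity
  · have hIb := I_bound f hf hM
    have htanh := tanh_ne_zero ht
    have h1 : |gg f t| = |II f t| / Real.tanh t ^ 2 := by
      rw [gg, abs_mul, abs_inv, abs_pow, sq_abs, div_eq_inv_mul]
    rw [h1]
    rw [div_le_iff₀ (by positivity)]
    have key : M * |Real.tanh t| * |t| ≤ M * Real.cosh t * Real.tanh t ^ 2 := by
      have hM0 : 0 ≤ M := (abs_nonneg _).trans (hM 0 (by simp [abs_nonneg]))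
      have h2 : |t| ≤ Real.cosh t * |Real.tanh t| := by
        have h3 := abs_self_le_abs_sinh t
        have h4 : |Real.tanh t| = |Real.sinh t| / Real.cosh t := by
          rw [tanh_eq_sinh_div_cosh, abs_div, abs_of_pos (Real.cosh_pos t)]
        rw [h4, mul_div_cancel₀ _ (Real.cosh_pos t).ne']
        exact h3
      calc M * |Real.tanh t| * |t| ≤ M * |Real.tanh t| * (Real.cosh t * |Real.tanh t|) := by
            apply mul_le_mul_of_nonneg_left h2 (by positivity)
        _ = M * Real.cosh t * Real.tanh t ^ 2 := by
            rw [← sq_abs]; ring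
    exact hIb.trans key

lemma g_measurable : Measurable (gg f) := by
  apply Measurable.mul
  · exact ((continuous_tanh.measurable.pow_const 2)).inv
  · exact (I_cont f hf).measurable

lemma g_intervalIntegrable (a b : ℝ) : IntervalIntegrable (gg f) volume a b := by
  set c := max |a| |b| with hc
  obtain ⟨M, hM⟩ := (isCompact_Icc (a := -c) (b := c)).exists_bound_of_continuousOn
    hf.continuousOn
  have hbound : ∀ x ∈ Set.uIoc a b, ‖gg f x‖ ≤ (|M| + 1) * Real.cosh c := by
    intro x hx
    have hxc : |x| ≤ c := by
      have k1 : |a| ≤ c := le_max_left _ _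
      have k2 : |b| ≤ c := le_max_right _ _
      have k3 := neg_abs_le a; have k4 := le_abs_self a
      have k5 := neg_abs_le b; have k6 := le_abs_self b
      rw [abs_le]
      rcases Set.mem_uIoc.1 hx with h1 | h1
      · exact ⟨by linarith [h1.1], by linarith [h1.2]⟩
      · exact ⟨by linarith [h1.1], by linarith [h1.2]⟩
    have hMx : ∀ y, |y| ≤ |x| → |f y| ≤ |M| + 1 := by
      intro y hy
      have : y ∈ Set.Icc (-c) c := by
        rw [Set.mem_Icc, ← abs_le]; exact hy.trans hxc
      have := hM y this
      rw [Real.norm_eq_abs] at this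
      calc |f y| ≤ M := this
        _ ≤ |M| + 1 := by linarith [le_abs_self M]
    have := g_bound f hf hMx
    rw [Real.norm_eq_abs]
    refine this.trans ?_
    have h1 : Real.cosh x ≤ Real.cosh c := Real.cosh_le_cosh.2 (by
      rwa [abs_of_nonneg (le_trans (abs_nonneg a) (le_max_left _ _))])
    have : (0:ℝ) ≤ |M| + 1 := by positivity
    nlinarith [Real.cosh_pos x]
  apply IntervalIntegrable.mono_fun' (g := fun _ => (|M| + 1) * Real.cosh c)
    (intervalIntegrable_const)
  · exact ((g_measurable f hf).aestronglyMeasurable).restrict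
  · exact Filter.eventually_of_mem (self_mem_ae_restrict measurableSet_uIoc) hbound

lemma g_continuousAt {s : ℝ} (hs : s ≠ 0) : ContinuousAt (gg f) s := by
  apply ContinuousAt.mul
  · exact (((continuous_tanh.continuousAt (x := s)).pow 2).inv₀
      (pow_ne_zero 2 (tanh_ne_zero hs)))
  · exact (I_cont f hf).continuousAt

lemma hw {s : ℝ} (hs : s ≠ 0) : HasDerivAt (ww f) (gg f s) s :=
  integral_hasDerivAt_right (g_intervalIntegrable f hf 0 s)
    (((g_measurable f hf).stronglyMeasurable).stronglyMeasurableAtFilter)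
    (g_continuousAt f hf hs)

lemma hW {s : ℝ} (hs : s ≠ 0) : HasDerivAt (WW f) (gg f s) s := by
  have ht := tanh_ne_zero hs
  have hc := (Real.cosh_pos s).ne'
  have h1 : HasDerivAt (fun x => x * Real.tanh x - 1)
      (Real.tanh s + s * (Real.cosh s ^ 2)⁻¹) s := by
    have := (hasDerivAt_id s).mul (hasDerivAt_tanh s)
    simpa using this.sub_const 1
  have h2 : HasDerivAt (fun x => (Real.tanh x)⁻¹)
      (-(Real.cosh s ^ 2)⁻¹ / Real.tanh s ^ 2) s := by
    have := (hasDerivAt_tanh s).inv ht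
    exact this
  have h3 := ((hI f hf s).mul h1).mul h2
  have h4 := h3.sub (hJ f hf s)
  refine h4.congr_deriv ?_
  symm
  simp only [Pi.mul_apply]
  unfold gg
  rw [tanh_eq_sinh_div_cosh] at *
  have hsinh := Real.sinh_ne_zero.2 hs
  have hcosh2 := Real.cosh_sq_sub_sinh_sq s
  field_simp
  ring_nf
  linear_combination (Real.cosh s * II f s) * hcosh2

lemma W_cont_puncture : Tendsto (fun x => ww f x - WW f x) (𝓝[≠] (0:ℝ)) (𝓝 0) := by
  obtain ⟨M, hM⟩ := (isCompact_Icc (a := (-1:ℝ)) (b := 1)).exists_bound_of_continuousOn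
    hf.continuousOn
  set M' : ℝ := |M| + 1 with hM'
  have hM'pos : 0 < M' := by positivity
  have hMf : ∀ y : ℝ, |y| ≤ 1 → |f y| ≤ M' := by
    intro y hy
    have h1 := hM y (by rw [Set.mem_Icc, ← abs_le]; exact hy)
    rw [Real.norm_eq_abs] at h1
    calc |f y| ≤ M := h1
      _ ≤ M' := by rw [hM']; linarith [le_abs_self M]
  have hsmall : ∀ᶠ x : ℝ in 𝓝[≠] (0:ℝ), |x| ≤ 1 := by
    apply eventually_nhdsWithin_of_eventually_nhds
    filter_upwards [Metric.ball_mem_nhds (0:ℝ) one_pos] with x hx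
    rw [Metric.mem_ball, Real.dist_eq, sub_zero] at hx
    exact hx.le
  -- tendsto ww
  have habs : Tendsto (fun x : ℝ => M' * Real.cosh 1 * |x|) (𝓝[≠] (0:ℝ)) (𝓝 0) := by
    have hc : Continuous fun x : ℝ => M' * Real.cosh 1 * |x| := continuous_const.mul continuous_abs
    exact (hc.tendsto' 0 0 (by simp)).mono_left nhdsWithin_le_nhds
  have hww : Tendsto (ww f) (𝓝[≠] (0:ℝ)) (𝓝 0) := by
    apply squeeze_zero_norm' _ habs
    filter_upwards [hsmall] with x hx
    have hb : ∀ t ∈ Set.uIoc (0:ℝ) x, ‖gg f t‖ ≤ M' * Real.cosh 1 := by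
      intro t ht
      have htx : |t| ≤ |x| := by
        rcases Set.mem_uIoc.1 ht with h1 | h1
        · rw [abs_of_pos h1.1]; exact h1.2.trans (le_abs_self x)
        · rw [abs_of_nonpos h1.2]; exact (neg_le_neg h1.1.le).trans (neg_le_abs x)
      have hMt : ∀ y, |y| ≤ |t| → |f y| ≤ M' := fun y hy => hMf y ((hy.trans htx).trans hx)
      have := g_bound f hf hMt
      rw [Real.norm_eq_abs]
      refine this.trans ?_
      have : Real.cosh t ≤ Real.cosh 1 := Real.cosh_le_cosh.2 (by
        rw [abs_one]; exact htx.trans hx)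
      nlinarith
    have := intervalIntegral.norm_integral_le_of_norm_le_const hb
    simpa [ww] using this
  -- tendsto WW
  have hIc := I_cont f hf
  have hJc : Continuous (JJ f) :=
    continuous_iff_continuousAt.2 fun s => (hJ f hf s).differentiableAt.continuousAt
  have hT1 : Tendsto (fun x => II f x * x) (𝓝[≠] (0:ℝ)) (𝓝 0) := by
    have : Tendsto (fun x => II f x * x) (𝓝 (0:ℝ)) (𝓝 (II f 0 * 0)) :=
      (hIc.tendsto 0).mul tendsto_id
    rw [mul_zero] at this
    exact this.mono_left nhdsWithin_le_nhds
  have hT2 : Tendsto (fun x => II f x * (Real.tanh x)⁻¹) (𝓝[≠] (0:ℝ)) (𝓝 0) := by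
    have habs2 : Tendsto (fun x : ℝ => M' * |x|) (𝓝[≠] (0:ℝ)) (𝓝 0) := by
      have hc : Continuous fun x : ℝ => M' * |x| := continuous_const.mul continuous_abs
      exact (hc.tendsto' 0 0 (by simp)).mono_left nhdsWithin_le_nhds
    apply squeeze_zero_norm' _ habs2
    filter_upwards [hsmall, self_mem_nhdsWithin] with x hx hx0
    have hx0' : x ≠ 0 := hx0
    have ht := tanh_ne_zero hx0'
    have hIb := I_bound f (hM := fun y hy => hMf y (hy.trans hx)) hf
    rw [Real.norm_eq_abs, abs_mul, abs_inv]
    rw [mul_inv_le_iff₀ (abs_pos.2 ht)]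
    calc |II f x| ≤ M' * |Real.tanh x| * |x| := hIb
      _ = M' * |x| * |Real.tanh x| := by ring
  have hWW : Tendsto (WW f) (𝓝[≠] (0:ℝ)) (𝓝 0) := by
    have heq : ∀ᶠ x : ℝ in 𝓝[≠] (0:ℝ),
        II f x * x - II f x * (Real.tanh x)⁻¹ - JJ f x = WW f x := by
      filter_upwards [self_mem_nhdsWithin] with x hx0
      have ht := tanh_ne_zero (hx0 : x ≠ 0)
      unfold WW
      field_simp
    have h0 : Tendsto (fun x => II f x * x - II f x * (Real.tanh x)⁻¹ - JJ f x)
        (𝓝[≠] (0:ℝ)) (𝓝 0) := by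
      have hT3 : Tendsto (JJ f) (𝓝[≠] (0:ℝ)) (𝓝 0) := by
        have : Tendsto (JJ f) (𝓝 (0:ℝ)) (𝓝 (JJ f 0)) := hJc.tendsto 0
        rw [J_zero f hf] at this
        exact this.mono_left nhdsWithin_le_nhds
      have := (hT1.sub hT2).sub hT3
      simpa using this
    exact h0.congr' heq
  have := hww.sub hWW
  simpa using this

lemma w_eq_W {s : ℝ} (hs : s ≠ 0) : ww f s = WW f s := by
  set D : ℝ → ℝ := fun x => ww f x - WW f x with hD
  have hDcont : ∀ x : ℝ, x ≠ 0 → ContinuousAt D x := fun x hx =>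
    ((hw f hf hx).sub (hW f hf hx)).differentiableAt.continuousAt
  have hDderiv : ∀ x : ℝ, x ≠ 0 → HasDerivAt D 0 x := by
    intro x hx
    have := (hw f hf hx).sub (hW f hf hx)
    rwa [sub_self] at this
  suffices h : D s = 0 by
    have := sub_eq_zero.1 h
    exact this
  rcases hs.lt_or_gt with hneg | hpos
  · -- s < 0
    have key : ∀ ε ∈ Set.Ico s (0:ℝ), D ε = D s := by
      intro ε hε
      have hcont : ContinuousOn D (Set.Icc s ε) := by
        intro x hx
        exact (hDcont x (by exact ne_of_lt (lt_of_le_of_lt hx.2 hε.2))).continuousWithinAt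
      have hderiv : ∀ x ∈ Set.Ico s ε, HasDerivWithinAt D 0 (Set.Ici x) x := by
        intro x hx
        exact (hDderiv x (ne_of_lt (lt_of_lt_of_le hx.2 (le_of_lt hε.2)))).hasDerivWithinAt
      exact constant_of_has_deriv_right_zero hcont hderiv ε (Set.right_mem_Icc.2 hε.1)
    have hmem : Set.Ico s (0:ℝ) ∈ 𝓝[<] (0:ℝ) :=
      Ico_mem_nhdsLT_of_mem (Set.mem_Ioc.2 ⟨hneg, le_refl 0⟩)
    have h2 : Tendsto D (𝓝[<] (0:ℝ)) (𝓝 (D s)) := by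
      apply tendsto_const_nhds.congr'
      filter_upwards [hmem] with ε hε
      exact (key ε hε).symm
    have h3 : Tendsto D (𝓝[<] (0:ℝ)) (𝓝 0) :=
      (W_cont_puncture f hf).mono_left (nhdsWithin_mono _ (fun x hx => ne_of_lt hx))
    exact tendsto_nhds_unique h2 h3
  · -- 0 < s
    have key : ∀ ε ∈ Set.Ioc (0:ℝ) s, D s = D ε := by
      intro ε hε
      have hcont : ContinuousOn D (Set.Icc ε s) := by
        intro x hx
        exact (hDcont x (ne_of_gt (lt_of_lt_of_le hε.1 hx.1))).continuousWithinAt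
      have hderiv : ∀ x ∈ Set.Ico ε s, HasDerivWithinAt D 0 (Set.Ici x) x := by
        intro x hx
        exact (hDderiv x (ne_of_gt (lt_of_lt_of_le hε.1 hx.1))).hasDerivWithinAt
      exact constant_of_has_deriv_right_zero hcont hderiv s (Set.right_mem_Icc.2 hε.2)
    have hmem : Set.Ioc (0:ℝ) s ∈ 𝓝[>] (0:ℝ) := Ioc_mem_nhdsGT hpos
    have h2 : Tendsto D (𝓝[>] (0:ℝ)) (𝓝 (D s)) := by
      apply tendsto_const_nhds.congr'
      filter_upwards [hmem] with ε hε
      exact key ε hε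
    have h3 : Tendsto D (𝓝[>] (0:ℝ)) (𝓝 0) :=
      (W_cont_puncture f hf).mono_left (nhdsWithin_mono _ (fun x hx => ne_of_gt hx))
    exact tendsto_nhds_unique h2 h3

lemma u_eq_v : (fun s => ww f s * Real.tanh s) = vv f := by
  funext x
  rcases eq_or_ne x 0 with rfl | hx
  · show ww f 0 * Real.tanh 0 = vv f 0
    simp [vv, ww, Real.tanh_zero, I_zero f hf]
  · show ww f x * Real.tanh x = vv f x
    rw [w_eq_W f hf hx]
    unfold WW vv
    have ht := tanh_ne_zero hx
    field_simp

lemma hv1 (x : ℝ) : HasDerivAt (vv f)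
    (II f x * (Real.tanh x + x * (Real.cosh x ^ 2)⁻¹) - (Real.cosh x ^ 2)⁻¹ * JJ f x) x := by
  have h1 : HasDerivAt (fun y => y * Real.tanh y - 1)
      (1 * Real.tanh x + x * (Real.cosh x ^ 2)⁻¹) x :=
    ((hasDerivAt_id x).mul (hasDerivAt_tanh x)).sub_const 1
  have hA := (hI f hf x).mul h1
  have hB := (hasDerivAt_tanh x).mul (hJ f hf x)
  have := hA.sub hB
  refine this.congr_deriv ?_
  symm
  ring

lemma hv2 (x : ℝ) : HasDerivAt
    (fun y => II f y * (Real.tanh y + y * (Real.cosh y ^ 2)⁻¹) - (Real.cosh y ^ 2)⁻¹ * JJ f y)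
    (f x - 2 * (Real.cosh x ^ 2)⁻¹ * vv f x) x := by
  have hcx := (Real.cosh_pos x).ne'
  have hsech : HasDerivAt (fun y => (Real.cosh y ^ 2)⁻¹)
      (-(2 * Real.cosh x ^ 1 * Real.sinh x) / (Real.cosh x ^ 2) ^ 2) x :=
    ((Real.hasDerivAt_cosh x).pow 2).inv (pow_ne_zero 2 hcx)
  have h1 : HasDerivAt (fun y => Real.tanh y + y * (Real.cosh y ^ 2)⁻¹)
      ((Real.cosh x ^ 2)⁻¹ + (1 * (Real.cosh x ^ 2)⁻¹ +
        x * (-(2 * Real.cosh x ^ 1 * Real.sinh x) / (Real.cosh x ^ 2) ^ 2))) x :=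
    (hasDerivAt_tanh x).add ((hasDerivAt_id x).mul hsech)
  have hA := (hI f hf x).mul h1
  have hB := hsech.mul (hJ f hf x)
  have := hA.sub hB
  refine this.congr_deriv ?_
  symm
  unfold vv
  rw [tanh_eq_sinh_div_cosh]
  have hcosh2 := Real.cosh_sq_sub_sinh_sq x
  field_simp
  ring_nf
  linear_combination (f x * Real.cosh x) * hcosh2

end

end L0Aux

open L0Aux in
theorem L0_right_inverse (f : ℝ → ℝ) (hf : Continuous f) :
    let u : ℝ → ℝ := fun s =>
      (∫ s' in (0:ℝ)..s, (tanh s' ^ 2)⁻¹ * ∫ s'' in (0:ℝ)..s', tanh s'' * f s'') * tanh s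
    ∀ s : ℝ, deriv (deriv u) s + 2 * (cosh s ^ 2)⁻¹ * u s = f s := by
  intro u s
  have huv : u = vv f := u_eq_v f hf
  have hd1 : deriv u = fun x =>
      II f x * (Real.tanh x + x * (Real.cosh x ^ 2)⁻¹) - (Real.cosh x ^ 2)⁻¹ * JJ f x := by
    rw [huv]
    funext x
    exact (hv1 f hf x).deriv
  rw [hd1, (hv2 f hf s).deriv, huv]
  ring
end

section
/- There exists a constant C₃ > 0 such that for every bounded continuous f : ℝ → ℝ with |f(s)| ≤ A for all s, the function L₀⁻¹(f)(s) = tanh(s) ∫₀^s tanh⁻²(s') ∫₀^{s'} tanh(s'') f(s'') ds'' ds' satisfies |L₀⁻¹(f)(s)| ≤ C₃ A s² for all s ∈ ℝ. -/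
open Real

lemma my_abs_tanh (x : ℝ) : |Real.tanh x| = Real.tanh |x| := by
  have h : ∀ y : ℝ, 0 ≤ y → 0 ≤ Real.tanh y := fun y hy => by
    rw [Real.tanh_eq_sinh_div_cosh]
    exact div_nonneg (Real.sinh_nonneg_iff.2 hy) (Real.cosh_pos y).le
  rcases le_total 0 x with hx | hx
  · rw [abs_of_nonneg hx, abs_of_nonneg (h x hx)]
  · have h2 : 0 ≤ Real.tanh (-x) := h (-x) (by linarith)
    have h3 : Real.tanh x ≤ 0 := by rw [← neg_nonneg, ← Real.tanh_neg]; exact h2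
    rw [abs_of_nonpos hx, abs_of_nonpos h3, ← Real.tanh_neg]

lemma my_sinh_le_mul_cosh {x : ℝ} (hx : 0 ≤ x) : Real.sinh x ≤ x * Real.cosh x := by
  have key : ∀ y : ℝ, HasDerivAt (fun y => y * Real.cosh y - Real.sinh y) (y * Real.sinh y) y := by
    intro y
    have h1 : HasDerivAt (fun y : ℝ => y * Real.cosh y) (1 * Real.cosh y + y * Real.sinh y) y :=
      (hasDerivAt_id y).mul (Real.hasDerivAt_cosh y)
    have h2 : HasDerivAt (fun y => y * Real.cosh y - Real.sinh y)
        (1 * Real.cosh y + y * Real.sinh y - Real.cosh y) y := h1.sub (Real.hasDerivAt_sinh y)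
    convert h2 using 1
    ring
  have mono : MonotoneOn (fun y => y * Real.cosh y - Real.sinh y) (Set.Ici 0) := by
    apply monotoneOn_of_deriv_nonneg (convex_Ici 0)
    · exact ((continuous_id.mul Real.continuous_cosh).sub Real.continuous_sinh).continuousOn
    · intro y _
      exact (key y).differentiableAt.differentiableWithinAt
    · intro y hy
      rw [interior_Ici, Set.mem_Ioi] at hy
      rw [(key y).deriv]
      exact mul_nonneg hy.le (Real.sinh_nonneg_iff.2 hy.le)
  have h0 := mono Set.self_mem_Ici (Set.mem_Ici.2 hx) hx
  simpa using h0

lemma my_abs_tanh_le_abs (x : ℝ) : |Real.tanh x| ≤ |x| := by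
  rw [my_abs_tanh, Real.tanh_eq_sinh_div_cosh, div_le_iff₀ (Real.cosh_pos _)]
  exact my_sinh_le_mul_cosh (abs_nonneg x)

lemma my_abs_tanh_le_one (x : ℝ) : |Real.tanh x| ≤ 1 := by
  rw [my_abs_tanh, Real.tanh_eq_sinh_div_cosh, div_le_one (Real.cosh_pos _)]
  nlinarith [Real.cosh_sq |x|, Real.sinh_nonneg_iff.2 (abs_nonneg x), Real.one_le_cosh |x|]

lemma my_half_le_tanh {x : ℝ} (hx : 1 ≤ x) : 1 / 2 ≤ Real.tanh x := by
  rw [Real.tanh_eq_sinh_div_cosh, le_div_iff₀ (Real.cosh_pos _), Real.sinh_eq, Real.cosh_eq]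
  have h1 : x + 1 ≤ Real.exp x := Real.add_one_le_exp x
  have h2 : Real.exp (-x) * Real.exp x = 1 := by
    rw [← Real.exp_add]; simp
  have h3 : 0 < Real.exp x := Real.exp_pos x
  have h4 : 0 < Real.exp (-x) := Real.exp_pos (-x)
  nlinarith

lemma my_tanh_lower {x : ℝ} (hx0 : 0 ≤ x) (hx1 : x ≤ 1) : x / 2 ≤ Real.tanh x := by
  rw [Real.tanh_eq_sinh_div_cosh, le_div_iff₀ (Real.cosh_pos _)]
  have h1 : x ≤ Real.sinh x := Real.self_le_sinh_iff.2 hx0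
  have h2 : Real.cosh x ≤ 2 := by
    have hc : Real.cosh x ≤ Real.cosh 1 := by
      rw [Real.cosh_le_cosh]
      rw [abs_of_nonneg hx0]
      simpa using hx1
    have hc1 : Real.cosh 1 ≤ 2 := by
      rw [Real.cosh_eq]
      have h3 : Real.exp 1 ≤ 2.7182818286 := Real.exp_one_lt_d9.le
      have h4 : Real.exp (-1 : ℝ) ≤ 1 := Real.exp_le_one_iff.2 (by norm_num)
      linarith
    linarith
  nlinarith [Real.cosh_pos x]

lemma my_mem_uIoc_abs {x a : ℝ} (h : x ∈ Set.uIoc 0 a) : |x| ≤ |a| := by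
  rw [Set.uIoc, Set.mem_Ioc] at h
  obtain ⟨h1, h2⟩ := h
  rw [abs_le]
  constructor
  · have : -|a| ≤ min 0 a := le_min (neg_nonpos.2 (abs_nonneg a)) (neg_abs_le a)
    linarith
  · exact le_trans h2 (max_le (abs_nonneg a) (le_abs_self a))

theorem L0_inv_bounded :
    ∃ C₃ : ℝ, 0 < C₃ ∧ ∀ (f : ℝ → ℝ) (A : ℝ), Continuous f → (∀ s, |f s| ≤ A) →
      ∀ s : ℝ,
        |tanh s * ∫ s' in (0:ℝ)..s, (tanh s' ^ 2)⁻¹ * ∫ s'' in (0:ℝ)..s', tanh s'' * f s''|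
          ≤ C₃ * A * s ^ 2 := by
  refine ⟨8, by norm_num, ?_⟩
  intro f A _hf hA s
  have hA0 : 0 ≤ A := le_trans (abs_nonneg _) (hA 0)
  have hs0 : (0:ℝ) ≤ |s| := abs_nonneg s
  -- inner integral bounds
  have hinner1 : ∀ s' : ℝ, |∫ s'' in (0:ℝ)..s', Real.tanh s'' * f s''| ≤ A * |s'| := by
    intro s'
    have := intervalIntegral.norm_integral_le_of_norm_le_const (C := A) (a := (0:ℝ)) (b := s')
      (f := fun s'' => Real.tanh s'' * f s'') ?_
    · simpa [Real.norm_eq_abs] using this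
    · intro x _
      rw [Real.norm_eq_abs, abs_mul]
      calc |Real.tanh x| * |f x| ≤ 1 * A :=
            mul_le_mul (my_abs_tanh_le_one x) (hA x) (abs_nonneg _) one_pos.le
        _ = A := one_mul A
  have hinner2 : ∀ s' : ℝ, |∫ s'' in (0:ℝ)..s', Real.tanh s'' * f s''| ≤ A * |s'| * |s'| := by
    intro s'
    have := intervalIntegral.norm_integral_le_of_norm_le_const (C := |s'| * A) (a := (0:ℝ))
      (b := s') (f := fun s'' => Real.tanh s'' * f s'') ?_
    · rw [Real.norm_eq_abs] at this
      calc |∫ s'' in (0:ℝ)..s', Real.tanh s'' * f s''| ≤ |s'| * A * |s' - 0| := this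
        _ = A * |s'| * |s'| := by rw [sub_zero]; ring
    · intro x hx
      rw [Real.norm_eq_abs, abs_mul]
      have h1 : |Real.tanh x| ≤ |s'| := le_trans (my_abs_tanh_le_abs x) (my_mem_uIoc_abs hx)
      exact mul_le_mul h1 (hA x) (abs_nonneg _) (abs_nonneg _)
  -- bound on the middle integrand
  have hF : ∀ s' ∈ Set.uIoc (0:ℝ) s,
      ‖(Real.tanh s' ^ 2)⁻¹ * ∫ s'' in (0:ℝ)..s', Real.tanh s'' * f s''‖ ≤ 4 * A * (1 + |s|) := by
    intro s' hs'
    have habs : |s'| ≤ |s| := my_mem_uIoc_abs hs'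
    rw [Real.norm_eq_abs, abs_mul, abs_inv, abs_pow, sq_abs]
    rcases eq_or_ne s' 0 with rfl | hne
    · simp
      nlinarith [mul_nonneg hA0 hs0]
    · have htpos : 0 < |Real.tanh s'| := by
        rw [my_abs_tanh]
        have h0 : 0 < |s'| := abs_pos.2 hne
        rcases le_total (|s'|) 1 with h | h
        · calc (0:ℝ) < |s'| / 2 := by linarith
            _ ≤ Real.tanh |s'| := my_tanh_lower h0.le h
        · calc (0:ℝ) < 1/2 := by norm_num
            _ ≤ Real.tanh |s'| := my_half_le_tanh h
      have hsq : 0 < Real.tanh s' ^ 2 := by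
        rw [← sq_abs]; positivity
      rcases le_total (|s'|) 1 with h | h
      · -- small case : tanh s' ≥ |s'|/2
        have ht : |s'| / 2 ≤ |Real.tanh s'| := by
          rw [my_abs_tanh]; exact my_tanh_lower (abs_nonneg s') h
        have hsq2 : s' ^ 2 / 4 ≤ Real.tanh s' ^ 2 := by
          rw [← sq_abs (Real.tanh s'), ← sq_abs s']
          nlinarith [abs_nonneg s', abs_nonneg (Real.tanh s')]
        have hs'pos : 0 < s' ^ 2 := by positivity
        have hinv : (Real.tanh s' ^ 2)⁻¹ ≤ 4 / s' ^ 2 := by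
          calc (Real.tanh s' ^ 2)⁻¹ ≤ (s' ^ 2 / 4)⁻¹ :=
              inv_anti₀ (by positivity) hsq2
            _ = 4 / s' ^ 2 := by rw [inv_div]
        calc (Real.tanh s' ^ 2)⁻¹ * |∫ s'' in (0:ℝ)..s', Real.tanh s'' * f s''|
            ≤ (4 / s' ^ 2) * (A * |s'| * |s'|) := by
              apply mul_le_mul hinv (hinner2 s') (abs_nonneg _) (by positivity)
          _ = 4 * A := by
              rw [div_mul_eq_mul_div, div_eq_iff (ne_of_gt hs'pos)]
              linear_combination (4 * A) * abs_mul_abs_self s'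
          _ ≤ 4 * A * (1 + |s|) := by nlinarith [mul_nonneg hA0 hs0]
      · -- large case : tanh s' ≥ 1/2
        have ht : 1/2 ≤ |Real.tanh s'| := by
          rw [my_abs_tanh]; exact my_half_le_tanh h
        have hsq2 : (1:ℝ)/4 ≤ Real.tanh s' ^ 2 := by
          rw [← sq_abs (Real.tanh s')]
          nlinarith
        have hinv : (Real.tanh s' ^ 2)⁻¹ ≤ 4 := by
          calc (Real.tanh s' ^ 2)⁻¹ ≤ ((1:ℝ)/4)⁻¹ := (inv_le_inv₀ hsq (by norm_num)).2 hsq2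
            _ = 4 := by norm_num
        calc (Real.tanh s' ^ 2)⁻¹ * |∫ s'' in (0:ℝ)..s', Real.tanh s'' * f s''|
            ≤ 4 * (A * |s'|) := mul_le_mul hinv (hinner1 s') (abs_nonneg _) (by norm_num)
          _ ≤ 4 * A * (1 + |s|) := by nlinarith [mul_nonneg hA0 (sub_nonneg.2 habs)]
  have houter := intervalIntegral.norm_integral_le_of_norm_le_const hF
  rw [Real.norm_eq_abs, sub_zero] at houter
  have ht1 : |Real.tanh s| ≤ 1 := my_abs_tanh_le_one s
  have hts : |Real.tanh s| ≤ |s| := my_abs_tanh_le_abs s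
  have htnn : 0 ≤ |Real.tanh s| := abs_nonneg _
  calc |Real.tanh s * ∫ s' in (0:ℝ)..s, (Real.tanh s' ^ 2)⁻¹ *
          ∫ s'' in (0:ℝ)..s', Real.tanh s'' * f s''|
      = |Real.tanh s| * |∫ s' in (0:ℝ)..s, (Real.tanh s' ^ 2)⁻¹ *
          ∫ s'' in (0:ℝ)..s', Real.tanh s'' * f s''| := abs_mul _ _
    _ ≤ |Real.tanh s| * (4 * A * (1 + |s|) * |s|) := by
        apply mul_le_mul_of_nonneg_left houter htnn
    _ ≤ 8 * A * s ^ 2 := by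
        nlinarith [sq_abs s, mul_nonneg (mul_nonneg hA0 (sub_nonneg.2 hts)) hs0,
          mul_nonneg (mul_nonneg hA0 (sub_nonneg.2 ht1)) (mul_self_nonneg |s|)]
end
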